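/- arXiv:1210.7961 — 5 statements merged into one kernel-verified Lean document; each statement's English description precedes it below -/
import Mathlib

section
/- If L_1 and L_2 are non-proportional nonzero linear forms and 2k ≥ d, then dim_F (V_1 ∩ V_2) = binomial(2k-d+n, n), where V_i = { L_i^{d-k} F : F ∈ R_k } ⊆ R_d. -/
open MvPolynomial

private lemma degree_one_single {σ : Type*} [DecidableEq σ] (d : σ →₀ ℕ) (h : d.degree = 1) :
    ∃ i, d = Finsupp.single i 1 := by
  have h1 : Multiset.card (Finsupp.toMultiset d) = 1 := by
    rw [Finsupp.card_toMultiset]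
    simpa [Finsupp.degree_apply, Finsupp.sum] using h
  obtain ⟨i, hi⟩ := Multiset.card_eq_one.mp h1
  refine ⟨i, ?_⟩
  have := congrArg Multiset.toFinsupp hi
  rwa [Finsupp.toMultiset_toFinsupp, Multiset.toFinsupp_singleton] at this

private lemma linear_rep {σ : Type*} [Fintype σ] [DecidableEq σ] {K : Type*} [CommRing K]
    {L : MvPolynomial σ K} (hL : L.IsHomogeneous 1) :
    L = ∑ i : σ, MvPolynomial.coeff (Finsupp.single i 1) L • MvPolynomial.X i := by
  apply MvPolynomial.ext; intro d
  rw [MvPolynomial.coeff_sum]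
  simp only [MvPolynomial.coeff_smul, MvPolynomial.coeff_X', smul_eq_mul, mul_ite, mul_one,
    mul_zero]
  by_cases hd : d.degree = 1
  · obtain ⟨i₀, rfl⟩ := degree_one_single d hd
    have he : ∀ i : σ, (Finsupp.single i 1 = Finsupp.single i₀ 1) ↔ i = i₀ := fun i =>
      Finsupp.single_left_inj one_ne_zero
    simp_rw [he]
    rw [Finset.sum_ite_eq' Finset.univ i₀ (fun i => coeff (Finsupp.single i 1) L)]
    simp
  · rw [hL.coeff_eq_zero hd, Finset.sum_eq_zero]
    intro i _
    rw [if_neg]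
    intro hcon
    apply hd
    rw [← hcon]
    simp [Finsupp.degree_apply, Finsupp.support_single_ne_zero]

private lemma prime_X_var (K : Type*) [Field K] (N : ℕ) (j : Fin (N+1)) :
    Prime (X j : MvPolynomial (Fin (N+1)) K) := by
  rw [← MulEquiv.prime_iff (renameEquiv K (Equiv.swap j 0)).toMulEquiv]
  have h : (renameEquiv K (Equiv.swap j 0)).toMulEquiv (X j)
      = (X (0 : Fin (N+1)) : MvPolynomial (Fin (N+1)) K) := by simp
  rw [h, ← MulEquiv.prime_iff (finSuccEquiv K N).toMulEquiv]
  have h2 : (finSuccEquiv K N).toMulEquiv (X 0) = Polynomial.X := by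
    simpa using finSuccEquiv_X_zero (R := K) (n := N)
  rw [h2]
  exact Polynomial.prime_X

private lemma prime_linear {K : Type*} [Field K] {N : ℕ} {L : MvPolynomial (Fin (N+1)) K}
    (hL : L.IsHomogeneous 1) (hL0 : L ≠ 0) : Prime L := by
  classical
  obtain ⟨d, hd⟩ : ∃ d, coeff d L ≠ 0 := by
    by_contra h
    push_neg at h
    exact hL0 (MvPolynomial.ext _ _ fun d => by simp [h d])
  obtain ⟨j, rfl⟩ := degree_one_single d (by
    rw [show Finsupp.degree d = Finsupp.weight 1 d from DFunLike.congr_fun Finsupp.degree_eq_weight_one d]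
    exact hL hd)
  set c := coeff (Finsupp.single j 1) L with hc
  set M := L - c • X j with hM
  have hXj : ((c • X j : MvPolynomial (Fin (N+1)) K)).IsHomogeneous 1 := by
    rw [smul_eq_C_mul]; exact isHomogeneous_C_mul_X c j
  have hMhom : M.IsHomogeneous 1 := hL.sub hXj
  have hMc : coeff (Finsupp.single j 1) M = 0 := by
    simp [hM, MvPolynomial.coeff_smul, MvPolynomial.coeff_X, ← hc]
  have fix : ∀ (w : Fin (N+1) → MvPolynomial (Fin (N+1)) K), (∀ i, i ≠ j → w i = X i) →
      ∀ P : MvPolynomial (Fin (N+1)) K, P.IsHomogeneous 1 →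
      coeff (Finsupp.single j 1) P = 0 → aeval w P = P := by
    intro w hw P hP hPc
    conv_lhs => rw [linear_rep hP]
    rw [map_sum]
    conv_rhs => rw [linear_rep hP]
    refine Finset.sum_congr rfl fun i _ => ?_
    rw [map_smul, aeval_X]
    by_cases hi : i = j
    · subst hi; rw [hPc]; simp
    · rw [hw i hi]
  set u : Fin (N+1) → MvPolynomial (Fin (N+1)) K :=
    fun i => if i = j then c⁻¹ • (X j - M) else X i with hu
  set v : Fin (N+1) → MvPolynomial (Fin (N+1)) K :=
    fun i => if i = j then c • X j + M else X i with hv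
  have hu' : ∀ i, i ≠ j → u i = X i := fun i hi => if_neg hi
  have hv' : ∀ i, i ≠ j → v i = X i := fun i hi => if_neg hi
  have huj : u j = c⁻¹ • (X j - M) := if_pos rfl
  have hvj : v j = c • X j + M := if_pos rfl
  have hvM : aeval v M = M := fix v hv' M hMhom hMc
  have huM : aeval u M = M := fix u hu' M hMhom hMc
  have hcomp1 : (aeval v).comp (aeval u) = AlgHom.id K (MvPolynomial (Fin (N+1)) K) := by
    apply MvPolynomial.algHom_ext
    intro i
    rw [AlgHom.comp_apply, aeval_X, AlgHom.id_apply]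
    by_cases hi : i = j
    · subst hi
      rw [huj, map_smul, map_sub, aeval_X, hvj, hvM]
      rw [add_sub_cancel_right, smul_smul, inv_mul_cancel₀ hd, one_smul]
    · rw [hu' i hi, aeval_X, hv' i hi]
  have hcomp2 : (aeval u).comp (aeval v) = AlgHom.id K (MvPolynomial (Fin (N+1)) K) := by
    apply MvPolynomial.algHom_ext
    intro i
    rw [AlgHom.comp_apply, aeval_X, AlgHom.id_apply]
    by_cases hi : i = j
    · subst hi
      rw [hvj, map_add, map_smul, aeval_X, huj, huM, smul_smul, mul_inv_cancel₀ hd, one_smul,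
        sub_add_cancel]
    · rw [hv' i hi, aeval_X, hu' i hi]
  let e : MvPolynomial (Fin (N+1)) K ≃ₐ[K] MvPolynomial (Fin (N+1)) K :=
    AlgEquiv.ofAlgHom (aeval u) (aeval v) hcomp2 hcomp1
  rw [← MulEquiv.prime_iff e.toMulEquiv]
  have heL : e.toMulEquiv L = X j := by
    have hLdec : L = c • X j + M := by rw [hM]; ring
    show aeval u L = X j
    rw [hLdec, map_add, map_smul, aeval_X, huj, huM, smul_smul, mul_inv_cancel₀ hd, one_smul,
      sub_add_cancel]
  rw [heL]
  exact prime_X_var K N j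

private lemma cofactor {σ : Type*} {K : Type*} [CommRing K] {P Q : MvPolynomial σ K} {a b : ℕ}
    (hP : P.IsHomogeneous a) (hPQ : (P * Q).IsHomogeneous (a + b)) :
    ∃ H : MvPolynomial σ K, H.IsHomogeneous b ∧ P * Q = P * H := by
  refine ⟨homogeneousComponent b Q, homogeneousComponent_isHomogeneous b Q, ?_⟩
  have h1 : homogeneousComponent (a+b) (P * Q) = P * Q := by
    rw [homogeneousComponent_of_mem hPQ, if_pos rfl]
  have hdecomp : P * Q = ∑ i ∈ Finset.range (Q.totalDegree + 1),
      P * homogeneousComponent i Q := by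
    rw [← Finset.mul_sum, sum_homogeneousComponent]
  have h2 : ∀ i ∈ Finset.range (Q.totalDegree + 1),
      homogeneousComponent (a+b) (P * homogeneousComponent i Q)
      = if i = b then P * homogeneousComponent i Q else 0 := by
    intro i _
    have hhom : (P * homogeneousComponent i Q).IsHomogeneous (a + i) :=
      hP.mul (homogeneousComponent_isHomogeneous i Q)
    rw [homogeneousComponent_of_mem hhom]
    by_cases h : i = b
    · subst h; simp
    · rw [if_neg (fun hc => h (by omega)), if_neg h]
  conv_lhs => rw [← h1, hdecomp]
  rw [map_sum, Finset.sum_congr rfl h2, Finset.sum_ite_eq' (Finset.range _) b]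
  by_cases hb : b ∈ Finset.range (Q.totalDegree + 1)
  · rw [if_pos hb]
  · rw [if_neg hb]
    have hz : homogeneousComponent b Q = 0 :=
      homogeneousComponent_eq_zero _ _ (by simpa using Finset.mem_range.not.mp hb)
    rw [hz, mul_zero]

private lemma not_dvd_of_not_smul {K : Type*} [Field K] {σ : Type*}
    {L₁ L₂ : MvPolynomial σ K} (hL₁ : L₁.IsHomogeneous 1) (hL₂ : L₂.IsHomogeneous 1)
    (hprop : ¬ ∃ c : K, L₁ = c • L₂) : ¬ (L₂ ∣ L₁) := by
  rintro ⟨Q, hQ⟩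
  have hhom : (L₂ * Q).IsHomogeneous (1 + 0) := by rw [← hQ]; simpa using hL₁
  obtain ⟨H, hH, hPH⟩ := cofactor hL₂ hhom
  have hHC : H = C (coeff 0 H) := by
    have h1 := homogeneousComponent_of_mem (m := 0)
      (show H ∈ homogeneousSubmodule σ K 0 from hH)
    rw [if_pos rfl, homogeneousComponent_zero] at h1
    exact h1.symm
  refine hprop ⟨coeff 0 H, ?_⟩
  rw [hQ, hPH, smul_eq_C_mul]
  conv_lhs => rw [hHC]
  ring

private lemma finrank_homog (K : Type*) [Field K] (n r : ℕ) :
    Module.finrank K (homogeneousSubmodule (Fin (n+1)) K r) = (r + n).choose n := by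
  classical
  have hdeg : ∀ f : Fin (n+1) →₀ ℕ, f.degree = f.sum fun _ => id := fun f => rfl
  let E : {d : Fin (n+1) →₀ ℕ // d.degree = r} ≃ Sym (Fin (n+1)) r :=
  { toFun := fun d => ⟨Finsupp.toMultiset d.1, by
      rw [Finsupp.card_toMultiset, ← hdeg, d.2]⟩
    invFun := fun s => ⟨Multiset.toFinsupp s.1, by
      rw [hdeg, Multiset.toFinsupp_sum_eq, s.2]⟩
    left_inv := fun d => Subtype.ext (Finsupp.toMultiset_toFinsupp d.1)
    right_inv := fun s => Subtype.ext (Multiset.toFinsupp_toMultiset s.1) }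
  haveI : Fintype {d : Fin (n+1) →₀ ℕ // d.degree = r} := Fintype.ofEquiv _ E.symm
  haveI : Fintype ↥{d : Fin (n+1) →₀ ℕ | d.degree = r} :=
    inferInstanceAs (Fintype {d : Fin (n+1) →₀ ℕ // d.degree = r})
  have hsub : homogeneousSubmodule (Fin (n+1)) K r
      = MvPolynomial.restrictSupport K {d : Fin (n+1) →₀ ℕ | d.degree = r} :=
    homogeneousSubmodule_eq_finsupp_supported _ _ r
  rw [hsub, Module.finrank_eq_card_basis
    (MvPolynomial.basisRestrictSupport K {d : Fin (n+1) →₀ ℕ | d.degree = r})]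
  have hcard : Fintype.card ↥{d : Fin (n+1) →₀ ℕ | d.degree = r}
      = Fintype.card (Sym (Fin (n+1)) r) := Fintype.card_congr E
  rw [hcard, Sym.card_sym_eq_choose]
  rw [Fintype.card_fin]
  have h1 : n + 1 + r - 1 = r + n := by omega
  rw [h1]
  have hsymm := Nat.choose_symm (Nat.le_add_left n r)
  rw [Nat.add_sub_cancel] at hsymm
  exact hsymm

theorem osculating_intersection_dim (F : Type*) [Field F] (n d k : ℕ) (hn : 1 ≤ n)
    (hk : 1 ≤ k) (hkd : k < d) (h2k : d ≤ 2 * k)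
    (L₁ L₂ : MvPolynomial (Fin (n+1)) F)
    (hL₁ : L₁ ∈ MvPolynomial.homogeneousSubmodule (Fin (n+1)) F 1)
    (hL₂ : L₂ ∈ MvPolynomial.homogeneousSubmodule (Fin (n+1)) F 1)
    (hL₁0 : L₁ ≠ 0) (hL₂0 : L₂ ≠ 0)
    (hprop : ¬ ∃ c : F, L₁ = c • L₂) :
    Module.finrank F
      (((MvPolynomial.homogeneousSubmodule (Fin (n+1)) F k).map
          (LinearMap.mulLeft F (L₁ ^ (d - k)))) ⊓
        ((MvPolynomial.homogeneousSubmodule (Fin (n+1)) F k).map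
          (LinearMap.mulLeft F (L₂ ^ (d - k)))) : Submodule F (MvPolynomial (Fin (n+1)) F)) =
      (2 * k - d + n).choose n := by
  have hL₁' : L₁.IsHomogeneous 1 := hL₁
  have hL₂' : L₂.IsHomogeneous 1 := hL₂
  set m := d - k with hm
  set r := 2 * k - d with hr
  have hmr : m + r = k := by omega
  have hL₁m : (L₁ ^ m).IsHomogeneous m := by simpa using hL₁'.pow m
  have hL₂m : (L₂ ^ m).IsHomogeneous m := by simpa using hL₂'.pow m
  have hprime : Prime L₂ := prime_linear hL₂' hL₂0
  have hnd : ¬ (L₂ ∣ L₁) := not_dvd_of_not_smul hL₁' hL₂' hprop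
  have key : (((MvPolynomial.homogeneousSubmodule (Fin (n+1)) F k).map
          (LinearMap.mulLeft F (L₁ ^ m))) ⊓
        ((MvPolynomial.homogeneousSubmodule (Fin (n+1)) F k).map
          (LinearMap.mulLeft F (L₂ ^ m))))
      = (MvPolynomial.homogeneousSubmodule (Fin (n+1)) F r).map
          (LinearMap.mulLeft F (L₁ ^ m * L₂ ^ m)) := by
    apply le_antisymm
    · rintro x ⟨hx1, hx2⟩
      obtain ⟨G₁, hG₁, hxe1⟩ := Submodule.mem_map.mp hx1
      obtain ⟨G₂, hG₂, hxe2⟩ := Submodule.mem_map.mp hx2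
      rw [LinearMap.mulLeft_apply] at hxe1 hxe2
      have hdvd : L₂ ^ m ∣ L₁ ^ m * G₁ := ⟨G₂, by rw [hxe1, hxe2]⟩
      obtain ⟨Q, hQeq⟩ := hprime.pow_dvd_of_dvd_mul_left m (fun h => hnd (hprime.dvd_of_dvd_pow h)) hdvd
      have hhom : (L₂ ^ m * Q).IsHomogeneous (m + r) := by
        rw [← hQeq, hmr]
        exact hG₁
      obtain ⟨H, hH, heq⟩ := cofactor hL₂m hhom
      refine Submodule.mem_map.mpr ⟨H, hH, ?_⟩
      rw [LinearMap.mulLeft_apply, ← hxe1, hQeq, mul_comm (L₁ ^ m) (L₂ ^ m), mul_assoc, heq,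
        ← mul_assoc, mul_comm (L₂ ^ m) (L₁ ^ m), mul_assoc]
    · rintro x hx
      obtain ⟨H, hH, hxe⟩ := Submodule.mem_map.mp hx
      rw [LinearMap.mulLeft_apply] at hxe
      constructor
      · refine Submodule.mem_map.mpr ⟨L₂ ^ m * H, ?_, ?_⟩
        · have := hL₂m.mul (show H.IsHomogeneous r from hH)
          rwa [hmr] at this
        · rw [LinearMap.mulLeft_apply, ← hxe]; ring
      · refine Submodule.mem_map.mpr ⟨L₁ ^ m * H, ?_, ?_⟩
        · have := hL₁m.mul (show H.IsHomogeneous r from hH)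
          rwa [hmr] at this
        · rw [LinearMap.mulLeft_apply, ← hxe]; ring
  rw [key]
  have hne : L₁ ^ m * L₂ ^ m ≠ 0 :=
    mul_ne_zero (pow_ne_zero m hL₁0) (pow_ne_zero m hL₂0)
  rw [← LinearEquiv.finrank_eq (Submodule.equivMapOfInjective _
    (show Function.Injective (LinearMap.mulLeft F (L₁ ^ m * L₂ ^ m)) from mul_right_injective₀ hne) (MvPolynomial.homogeneousSubmodule (Fin (n+1)) F r))]
  exact finrank_homog F n r
end

section
/- For non-proportional nonzero linear forms L_1, L_2 and 1 ≤ k < d with 2k ≥ d, the subspaces V_1 = L_1^{d-k} R_k and V_2 = L_2^{d-k} R_k of R_d satisfy dist(V_1, V_2) = 2·(binomial(k+n,n) - binomial(2k-d+n,n)). -/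
open MvPolynomial

namespace OsculatingAux

variable {F : Type*} [Field F] {σ : Type*}

/-- The algebra map sending `X i ↦ (X i) * T`, recording homogeneous components as
coefficients of a one-variable polynomial. -/
noncomputable def toPoly : MvPolynomial σ F →ₐ[F] Polynomial (MvPolynomial σ F) :=
  MvPolynomial.aeval (fun i => Polynomial.C (MvPolynomial.X i) * Polynomial.X)

lemma toPoly_monomial (d : σ →₀ ℕ) (a : F) :
    toPoly (monomial d a) = Polynomial.C (monomial d a) * Polynomial.X ^ d.degree := by
  classical
  rw [toPoly, aeval_monomial, monomial_eq]
  simp only [Finsupp.prod, Finsupp.degree_apply, mul_pow, Finset.prod_mul_distrib,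
    ← Polynomial.C_pow, ← map_prod, Finset.prod_pow_eq_pow_sum]
  rw [show (algebraMap F (Polynomial (MvPolynomial σ F))) a
      = Polynomial.C (MvPolynomial.C a) from rfl, map_mul]
  ring

lemma homogeneousComponent_monomial' (j : ℕ) (d : σ →₀ ℕ) (a : F) :
    homogeneousComponent j (monomial d a) = if d.degree = j then monomial d a else 0 := by
  classical
  ext e
  rw [coeff_homogeneousComponent]
  by_cases hde : d = e
  · subst hde
    by_cases h : d.degree = j <;> simp [h]
  · by_cases h : d.degree = j <;> by_cases h2 : e.degree = j <;>
      simp [h, h2, coeff_monomial, hde]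

lemma coeff_toPoly (p : MvPolynomial σ F) (j : ℕ) :
    (toPoly p).coeff j = homogeneousComponent j p := by
  classical
  conv_lhs => rw [← p.support_sum_monomial_coeff]
  conv_rhs => rw [← p.support_sum_monomial_coeff]
  rw [map_sum, Polynomial.finset_sum_coeff, map_sum]
  refine Finset.sum_congr rfl fun d _ => ?_
  rw [toPoly_monomial, homogeneousComponent_monomial', Polynomial.coeff_C_mul,
    Polynomial.coeff_X_pow]
  by_cases h : d.degree = j
  · simp [h]
  · simp [h, show j ≠ d.degree from fun hh => h hh.symm]

lemma toPoly_ne_zero {p : MvPolynomial σ F} (hp : p ≠ 0) : toPoly p ≠ 0 := by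
  intro h
  apply hp
  calc p = ∑ i ∈ Finset.range (p.totalDegree + 1), homogeneousComponent i p :=
        (sum_homogeneousComponent p).symm
    _ = 0 := Finset.sum_eq_zero fun j _ => by
        rw [← coeff_toPoly, h, Polynomial.coeff_zero]

lemma isHomogeneous_of_forall_component {p : MvPolynomial σ F} {a : ℕ}
    (h : ∀ j, j ≠ a → homogeneousComponent j p = 0) : p.IsHomogeneous a := by
  by_cases ha : a < p.totalDegree + 1
  · have hp : p = homogeneousComponent a p := by
      conv_lhs => rw [← sum_homogeneousComponent p]
      rw [Finset.sum_eq_single_of_mem a (Finset.mem_range.mpr ha)]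
      intro b _ hb
      exact h b hb
    rw [hp]
    exact homogeneousComponent_isHomogeneous a p
  · have hp : p = 0 := by
      conv_lhs => rw [← sum_homogeneousComponent p]
      refine Finset.sum_eq_zero fun j hj => h j ?_
      rintro rfl
      exact ha (Finset.mem_range.mp hj)
    rw [hp]
    exact isHomogeneous_zero _ _ _

lemma toPoly_of_isHomogeneous {p : MvPolynomial σ F} {c : ℕ} (hp : p.IsHomogeneous c) :
    toPoly p = Polynomial.C p * Polynomial.X ^ c := by
  ext j
  rw [coeff_toPoly, homogeneousComponent_of_mem hp, Polynomial.coeff_C_mul,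
    Polynomial.coeff_X_pow]
  by_cases h : j = c <;> simp [h]

lemma isHomogeneous_of_mul_homogeneous {p q : MvPolynomial σ F} {c : ℕ}
    (hp : p ≠ 0) (hq : q ≠ 0) (h : (p * q).IsHomogeneous c) :
    ∃ a b, a + b = c ∧ p.IsHomogeneous a ∧ q.IsHomogeneous b := by
  have hP := toPoly_ne_zero hp
  have hQ := toPoly_ne_zero hq
  have hpq0 : p * q ≠ 0 := mul_ne_zero hp hq
  have hmul : toPoly p * toPoly q = Polynomial.C (p * q) * Polynomial.X ^ c := by
    rw [← map_mul, toPoly_of_isHomogeneous h]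
  have hnd : (toPoly p).natDegree + (toPoly q).natDegree = c := by
    rw [← Polynomial.natDegree_mul hP hQ, hmul, Polynomial.natDegree_C_mul_X_pow c _ hpq0]
  have hCX0 : Polynomial.C (p * q) * Polynomial.X ^ c ≠ 0 := by
    rw [← hmul]; exact mul_ne_zero hP hQ
  have hnt : (toPoly p).natTrailingDegree + (toPoly q).natTrailingDegree = c := by
    rw [← Polynomial.natTrailingDegree_mul hP hQ, hmul]
    have h1 := Polynomial.trailingDegree_C_mul_X_pow (a := p * q) c hpq0
    rw [Polynomial.trailingDegree_eq_natTrailingDegree hCX0] at h1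
    exact_mod_cast h1
  have hle1 := Polynomial.natTrailingDegree_le_natDegree (toPoly p)
  have hle2 := Polynomial.natTrailingDegree_le_natDegree (toPoly q)
  refine ⟨(toPoly p).natDegree, (toPoly q).natDegree, hnd, ?_, ?_⟩ <;>
  · apply isHomogeneous_of_forall_component
    intro j hj
    rw [← coeff_toPoly]
    rcases lt_or_gt_of_ne hj with hlt | hgt
    · exact Polynomial.coeff_eq_zero_of_lt_natTrailingDegree (by omega)
    · exact Polynomial.coeff_eq_zero_of_natDegree_lt hgt

lemma isHomogeneous_of_mul_left {p q : MvPolynomial σ F} {a c : ℕ}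
    (hpa : p.IsHomogeneous a) (hp : p ≠ 0) (h : (p * q).IsHomogeneous c) :
    q.IsHomogeneous (c - a) := by
  rcases eq_or_ne q 0 with rfl | hq
  · exact isHomogeneous_zero _ _ _
  obtain ⟨a', b, hab, hpa', hqb⟩ := isHomogeneous_of_mul_homogeneous hp hq h
  have ha : a' = a := by rw [← hpa'.totalDegree hp, hpa.totalDegree hp]
  have hb : b = c - a := by omega
  rwa [hb] at hqb

lemma eq_C_of_isHomogeneous_zero {p : MvPolynomial σ F} (hp : p.IsHomogeneous 0) :
    p = MvPolynomial.C (coeff 0 p) := by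
  classical
  ext d
  rw [coeff_C]
  split_ifs with h
  · rw [h]
  · by_contra hc
    have hw := hp (by simpa using hc)
    rw [show Finsupp.weight 1 d = d.degree from (DFunLike.congr_fun Finsupp.degree_eq_weight_one d).symm] at hw
    exact Ne.symm h ((Finsupp.degree_eq_zero_iff d).mp hw)

lemma isUnit_of_isHomogeneous_zero {p : MvPolynomial σ F} (hp : p.IsHomogeneous 0)
    (h0 : p ≠ 0) : IsUnit p := by
  have hc := eq_C_of_isHomogeneous_zero hp
  have hcc : coeff 0 p ≠ 0 := fun hcc => h0 (by rw [hc, hcc, map_zero])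
  rw [hc]
  exact (isUnit_iff_ne_zero.mpr hcc).map MvPolynomial.C

lemma prime_of_isHomogeneous_one {L : MvPolynomial σ F} (hL : L.IsHomogeneous 1)
    (h0 : L ≠ 0) : Prime L := by
  rw [← UniqueFactorizationMonoid.irreducible_iff_prime]
  constructor
  · intro hu
    obtain ⟨v, hv⟩ := hu.exists_right_inv
    have hv0 : v ≠ 0 := by rintro rfl; simp at hv
    have h1 : (L * v).IsHomogeneous 0 := by rw [hv]; exact isHomogeneous_one σ F
    obtain ⟨a, b, hab, hLa, hvb⟩ := isHomogeneous_of_mul_homogeneous h0 hv0 h1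
    have : a = 1 := by rw [← hLa.totalDegree h0, hL.totalDegree h0]
    omega
  · intro p q hpq
    have hp0 : p ≠ 0 := by rintro rfl; rw [zero_mul] at hpq; exact h0 hpq
    have hq0 : q ≠ 0 := by rintro rfl; rw [mul_zero] at hpq; exact h0 hpq
    obtain ⟨a, b, hab, hpa, hqb⟩ :=
      isHomogeneous_of_mul_homogeneous hp0 hq0 (hpq ▸ hL)
    rcases Nat.eq_zero_or_pos a with ha | ha
    · subst ha
      exact Or.inl (isUnit_of_isHomogeneous_zero hpa hp0)
    · have hb : b = 0 := by omega
      subst hb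
      exact Or.inr (isUnit_of_isHomogeneous_zero hqb hq0)

lemma finrank_homogeneousSubmodule (F : Type*) [Field F] (N m : ℕ) :
    Module.finrank F (homogeneousSubmodule (Fin N) F m) = (N + m - 1).choose m := by
  classical
  have e1 : (homogeneousSubmodule (Fin N) F m) ≃ₗ[F]
      AddMonoidAlgebra.supported F F {d : Fin N →₀ ℕ | d.degree = m} :=
    LinearEquiv.ofEq _ _ (homogeneousSubmodule_eq_finsupp_supported (Fin N) F m)
  have e2 := AddMonoidAlgebra.supportedEquivFinsupp (R := F) (S := F)
    {d : Fin N →₀ ℕ | d.degree = m}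
  have esym : {d : Fin N →₀ ℕ | d.degree = m} ≃ Sym (Fin N) m :=
    (Equiv.subtypeEquivRight (fun d => by
      simp [Finsupp.degree_apply, Finsupp.sum])).trans (Sym.equivNatSum (Fin N) m).symm
  haveI : Fintype {d : Fin N →₀ ℕ | d.degree = m} := Fintype.ofEquiv _ esym.symm
  rw [(e1.trans e2).finrank_eq, Module.finrank_finsupp_self,
    Fintype.card_congr esym, Sym.card_sym_eq_choose, Fintype.card_fin]

end OsculatingAux

open OsculatingAux

theorem osculating_dist_large_k (F : Type*) [Field F] (n d k : ℕ) (hn : 1 ≤ n)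
    (hk : 1 ≤ k) (hkd : k < d) (h2k : d ≤ 2 * k)
    (L₁ L₂ : MvPolynomial (Fin (n+1)) F)
    (hL₁ : L₁ ∈ MvPolynomial.homogeneousSubmodule (Fin (n+1)) F 1)
    (hL₂ : L₂ ∈ MvPolynomial.homogeneousSubmodule (Fin (n+1)) F 1)
    (hL₁0 : L₁ ≠ 0) (hL₂0 : L₂ ≠ 0)
    (hprop : ¬ ∃ c : F, L₁ = c • L₂)
    (V₁ V₂ : Submodule F (MvPolynomial (Fin (n+1)) F))
    (hV₁ : V₁ = (MvPolynomial.homogeneousSubmodule (Fin (n+1)) F k).map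
        (LinearMap.mulLeft F (L₁ ^ (d - k))))
    (hV₂ : V₂ = (MvPolynomial.homogeneousSubmodule (Fin (n+1)) F k).map
        (LinearMap.mulLeft F (L₂ ^ (d - k)))) :
    Module.finrank F (V₁ ⊔ V₂ : Submodule F (MvPolynomial (Fin (n+1)) F)) -
      Module.finrank F (V₁ ⊓ V₂ : Submodule F (MvPolynomial (Fin (n+1)) F)) =
    2 * ((k + n).choose n - (2 * k - d + n).choose n) := by
  classical
  set m := d - k with hm
  have hm1 : 1 ≤ m := by omega
  have hL₁h : L₁.IsHomogeneous 1 := hL₁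
  have hL₂h : L₂.IsHomogeneous 1 := hL₂
  have hL₁m : (L₁ ^ m).IsHomogeneous m := by simpa using hL₁h.pow m
  have hL₂m : (L₂ ^ m).IsHomogeneous m := by simpa using hL₂h.pow m
  have hL₁m0 : (L₁ ^ m) ≠ 0 := pow_ne_zero _ hL₁0
  have hL₂m0 : (L₂ ^ m) ≠ 0 := pow_ne_zero _ hL₂0
  -- non-divisibility
  have hnd : ¬ L₂ ∣ L₁ := by
    rintro ⟨u, hu⟩
    have hu0 : (L₂ * u).IsHomogeneous 1 := hu ▸ hL₁h
    have huh : u.IsHomogeneous 0 := by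
      simpa using isHomogeneous_of_mul_left hL₂h hL₂0 hu0
    apply hprop
    refine ⟨MvPolynomial.coeff 0 u, ?_⟩
    rw [MvPolynomial.smul_eq_C_mul, ← eq_C_of_isHomogeneous_zero huh, hu, mul_comm]
  have hprime : Prime L₂ := prime_of_isHomogeneous_one hL₂h hL₂0
  -- intersection
  have hinter : V₁ ⊓ V₂ =
      (MvPolynomial.homogeneousSubmodule (Fin (n+1)) F (2 * k - d)).map
        (LinearMap.mulLeft F (L₁ ^ m * L₂ ^ m)) := by
    apply le_antisymm
    · rintro x ⟨hx1, hx2⟩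
      rw [hV₁] at hx1
      rw [hV₂] at hx2
      obtain ⟨A, hA, hxA⟩ := hx1
      obtain ⟨B, hB, hxB⟩ := hx2
      rw [LinearMap.mulLeft_apply] at hxA hxB
      have hdvd : L₂ ^ m ∣ A := by
        refine hprime.pow_dvd_of_dvd_mul_left m
          (fun hd => hnd (hprime.dvd_of_dvd_pow hd))
          (⟨B, by rw [hxA, hxB]⟩ : L₂ ^ m ∣ L₁ ^ m * A)
      obtain ⟨Cc, hC⟩ := hdvd
      have hAk : ((L₂ ^ m) * Cc).IsHomogeneous k := hC ▸ hA
      have hCh : Cc.IsHomogeneous (2 * k - d) := by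
        have := isHomogeneous_of_mul_left hL₂m hL₂m0 hAk
        have hkm : k - m = 2 * k - d := by omega
        rwa [hkm] at this
      refine ⟨Cc, hCh, ?_⟩
      rw [LinearMap.mulLeft_apply, ← hxA, hC]
      ring
    · rintro x ⟨Cc, hC, rfl⟩
      rw [LinearMap.mulLeft_apply]
      have hCh : Cc.IsHomogeneous (2 * k - d) := hC
      constructor
      · rw [hV₁]
        refine ⟨L₂ ^ m * Cc, ?_, ?_⟩
        · have := hL₂m.mul hCh
          have hmk : m + (2 * k - d) = k := by omega
          rwa [hmk] at this
        · rw [LinearMap.mulLeft_apply]; ring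
      · rw [hV₂]
        refine ⟨L₁ ^ m * Cc, ?_, ?_⟩
        · have := hL₁m.mul hCh
          have hmk : m + (2 * k - d) = k := by omega
          rwa [hmk] at this
        · rw [LinearMap.mulLeft_apply]; ring
  -- dimensions
  have hrk : ∀ j : ℕ, Module.finrank F
      (MvPolynomial.homogeneousSubmodule (Fin (n+1)) F j) = (j + n).choose n := by
    intro j
    rw [finrank_homogeneousSubmodule F (n+1) j]
    have h1 : n + 1 + j - 1 = j + n := by omega
    rw [h1, Nat.choose_symm_add, Nat.add_comm]
  have hfd : ∀ j : ℕ, FiniteDimensional F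
      (MvPolynomial.homogeneousSubmodule (Fin (n+1)) F j) := by
    intro j
    apply FiniteDimensional.of_finrank_pos
    rw [hrk j]
    exact Nat.choose_pos (by omega)
  haveI := hfd k
  haveI := hfd (2 * k - d)
  have hinj : ∀ L : MvPolynomial (Fin (n+1)) F, L ≠ 0 →
      Function.Injective (LinearMap.mulLeft F L) := by
    intro L hL x y hxy
    simp only [LinearMap.mulLeft_apply] at hxy
    exact mul_left_cancel₀ hL hxy
  have e₁ := Submodule.equivMapOfInjective _ (hinj _ hL₁m0)
    (MvPolynomial.homogeneousSubmodule (Fin (n+1)) F k)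
  have e₂ := Submodule.equivMapOfInjective _ (hinj _ hL₂m0)
    (MvPolynomial.homogeneousSubmodule (Fin (n+1)) F k)
  have e₃ := Submodule.equivMapOfInjective _ (hinj _ (mul_ne_zero hL₁m0 hL₂m0))
    (MvPolynomial.homogeneousSubmodule (Fin (n+1)) F (2 * k - d))
  have hr1 : Module.finrank F V₁ = (k + n).choose n := by
    rw [hV₁, ← e₁.finrank_eq, hrk]
  have hr2 : Module.finrank F V₂ = (k + n).choose n := by
    rw [hV₂, ← e₂.finrank_eq, hrk]
  have hr3 : Module.finrank F (V₁ ⊓ V₂ : Submodule F (MvPolynomial (Fin (n+1)) F))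
      = (2 * k - d + n).choose n := by
    rw [hinter, ← e₃.finrank_eq, hrk]
  haveI : FiniteDimensional F V₁ := hV₁ ▸ e₁.finiteDimensional
  haveI : FiniteDimensional F V₂ := hV₂ ▸ e₂.finiteDimensional
  have hdim := Submodule.finrank_sup_add_finrank_inf_eq V₁ V₂
  have hle : (2 * k - d + n).choose n ≤ (k + n).choose n :=
    Nat.choose_le_choose n (by omega)
  omega
end

section
/- The map sending a nonzero linear form L (up to scalar) to the subspace L^{d-k} R_k of R_d is injective: if L_1^{d-k} R_k = L_2^{d-k} R_k as subspaces, then L_1 and L_2 are proportional. -/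
open MvPolynomial

lemma degree_eq_one_single {σ : Type*} (m : σ →₀ ℕ) (h : m.degree = 1) :
    ∃ i, m = Finsupp.single i 1 := by
  classical
  have hs : m.support.Nonempty := by
    rcases Finset.eq_empty_or_nonempty m.support with he | hne
    · exfalso
      have : m = 0 := by
        ext j; by_contra hj
        exact (Finset.notMem_empty j) (he ▸ Finsupp.mem_support_iff.2 hj)
      simp [this, Finsupp.degree] at h
    · exact hne
  obtain ⟨i, hi⟩ := hs
  have hmi : 1 ≤ m i := Nat.one_le_iff_ne_zero.2 (Finsupp.mem_support_iff.1 hi)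
  have hdeg : m.degree = ∑ j ∈ m.support, m j := rfl
  have hsum : ∑ j ∈ m.support, m j = m i + ∑ j ∈ m.support.erase i, m j := by
    rw [Finset.add_sum_erase _ _ hi]
  have hrest : ∑ j ∈ m.support.erase i, m j = 0 ∧ m i = 1 := by
    constructor <;> omega
  refine ⟨i, ?_⟩
  ext j
  rcases eq_or_ne j i with rfl | hji
  · simp [hrest.2]
  · have : m j = 0 := by
      by_contra hj
      have hjs : j ∈ m.support.erase i := Finset.mem_erase.2 ⟨hji, Finsupp.mem_support_iff.2 hj⟩
      have h2 : m j ≤ ∑ t ∈ m.support.erase i, m t :=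
        Finset.single_le_sum (fun _ _ => Nat.zero_le _) hjs
      omega
    simp [this, Finsupp.single_apply, Ne.symm hji]

lemma homog_one_rep {F : Type*} [Field F] {N : ℕ} (L : MvPolynomial (Fin N) F)
    (hL : L.IsHomogeneous 1) :
    L = ∑ i, C (coeff (Finsupp.single i 1) L) * X i := by
  classical
  ext m
  rw [coeff_sum]
  by_cases hm : m.degree = 1
  · obtain ⟨i, rfl⟩ := degree_eq_one_single m hm
    rw [Finset.sum_eq_single i]
    · simp [coeff_C_mul, coeff_X']
    · intro j _ hj
      simp [coeff_C_mul, coeff_X', Finsupp.single_left_inj (one_ne_zero (α := ℕ)), hj]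
    · simp
  · rw [hL.coeff_eq_zero hm]
    rw [Finset.sum_eq_zero]
    intro j _
    have : Finsupp.single j 1 ≠ m := by
      rintro rfl
      simp [Finsupp.degree_single] at hm
    simp [coeff_C_mul, coeff_X', this]

lemma eval_homog_one {F : Type*} [Field F] {N : ℕ} (L : MvPolynomial (Fin N) F)
    (hL : L.IsHomogeneous 1) (x : Fin N → F) :
    eval x L = ∑ i, coeff (Finsupp.single i 1) L * x i := by
  conv_lhs => rw [homog_one_rep L hL]
  simp

theorem osculating_map_injective (F : Type*) [Field F] (n d k : ℕ) (hn : 1 ≤ n)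
    (hk : 1 ≤ k) (hkd : k < d)
    (L₁ L₂ : MvPolynomial (Fin (n+1)) F)
    (hL₁ : L₁ ∈ MvPolynomial.homogeneousSubmodule (Fin (n+1)) F 1)
    (hL₂ : L₂ ∈ MvPolynomial.homogeneousSubmodule (Fin (n+1)) F 1)
    (hL₁0 : L₁ ≠ 0) (hL₂0 : L₂ ≠ 0)
    (heq : (MvPolynomial.homogeneousSubmodule (Fin (n+1)) F k).map
        (LinearMap.mulLeft F (L₁ ^ (d - k))) =
      (MvPolynomial.homogeneousSubmodule (Fin (n+1)) F k).map
        (LinearMap.mulLeft F (L₂ ^ (d - k)))) :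
    ∃ c : F, c ≠ 0 ∧ L₁ = c • L₂ := by
  classical
  rw [mem_homogeneousSubmodule] at hL₁ hL₂
  set a : Fin (n+1) → F := fun i => coeff (Finsupp.single i 1) L₁ with ha
  set b : Fin (n+1) → F := fun i => coeff (Finsupp.single i 1) L₂ with hb
  set fa : (Fin (n+1) → F) →ₗ[F] F := ∑ i, a i • LinearMap.proj i with hfa
  set fb : (Fin (n+1) → F) →ₗ[F] F := ∑ i, b i • LinearMap.proj i with hfb
  have hfa_apply : ∀ x, fa x = eval x L₁ := by
    intro x
    rw [eval_homog_one L₁ hL₁ x, hfa]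
    simp [LinearMap.sum_apply]
    rfl
  have hfb_apply : ∀ x, fb x = eval x L₂ := by
    intro x
    rw [eval_homog_one L₂ hL₂ x, hfb]
    simp [LinearMap.sum_apply]
    rfl
  by_cases hker : LinearMap.ker fb ≤ LinearMap.ker fa
  · -- proportional case
    have hmem : fa ∈ Submodule.span F {fb} := by
      have := mem_span_of_iInf_ker_le_ker (ι := Fin 1)
        (L := fun _ => fb) (K := fa) (by simpa using hker)
      simpa [Set.range_const] using this
    obtain ⟨c, hc⟩ := Submodule.mem_span_singleton.1 hmem
    have hcoeff : ∀ i, a i = c * b i := by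
      intro i
      have := congrArg (fun f => f (Pi.single i 1)) hc
      simp only [LinearMap.smul_apply, smul_eq_mul] at this
      rw [hfa_apply, hfb_apply, eval_homog_one L₁ hL₁, eval_homog_one L₂ hL₂] at this
      simp only [Pi.single_apply] at this
      rw [Finset.sum_eq_single i (fun j _ hj => by simp [hj]) (by simp),
        Finset.sum_eq_single i (fun j _ hj => by simp [hj]) (by simp)] at this
      simpa [ha, hb] using this.symm
    have hL1eq : L₁ = c • L₂ := by
      rw [homog_one_rep L₁ hL₁, homog_one_rep L₂ hL₂, Finset.smul_sum]
      refine Finset.sum_congr rfl fun i _ => ?_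
      show C (a i) * X i = c • (C (b i) * X i)
      rw [hcoeff i, smul_eq_C_mul, map_mul]
      ring
    refine ⟨c, ?_, hL1eq⟩
    rintro rfl
    simp at hL1eq
    exact hL₁0 hL1eq
  · -- contradiction case
    exfalso
    obtain ⟨x, hxb, hxa⟩ := SetLike.not_le_iff_exists.1 hker
    have hpow : L₁ ^ d ∈ (MvPolynomial.homogeneousSubmodule (Fin (n+1)) F k).map
        (LinearMap.mulLeft F (L₁ ^ (d - k))) := by
      refine ⟨L₁ ^ k, ?_, ?_⟩
      · simpa using hL₁.pow k
      · simp only [LinearMap.mulLeft_apply]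
        rw [← pow_add]
        congr 1
        omega
    rw [heq] at hpow
    obtain ⟨Q, _, hQe⟩ := hpow
    simp only [LinearMap.mulLeft_apply] at hQe
    have heval := congrArg (eval x) hQe
    rw [map_mul, map_pow, map_pow] at heval
    have hb0 : eval x L₂ = 0 := by rw [← hfb_apply]; exact hxb
    have ha0 : eval x L₁ ≠ 0 := by rw [← hfa_apply]; exact fun h => hxa (LinearMap.mem_ker.2 h)
    rw [hb0, zero_pow (by omega), zero_mul] at heval
    exact ha0 (pow_eq_zero_iff (by omega : d ≠ 0) |>.1 heval.symm)
end

section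
/- The code C_{k,n,d} consisting of the subspaces L^{d-k} R_k of R_d, as L ranges over nonzero linear forms over F_q up to scalar, has exactly 1 + q + ... + q^n elements. -/
open MvPolynomial

section Aux
variable {F : Type*} [Field F] {n : ℕ}

/-- The linear form with coefficient vector `a`. -/
noncomputable def linForm (a : Fin (n+1) → F) : MvPolynomial (Fin (n+1)) F :=
  ∑ i, C (a i) * X i

lemma linForm_isHomogeneous (a : Fin (n+1) → F) : (linForm a).IsHomogeneous 1 :=
  IsHomogeneous.sum _ _ _ fun _ _ => isHomogeneous_C_mul_X _ _

lemma eval_linForm (a v : Fin (n+1) → F) : eval v (linForm a) = ∑ i, a i * v i := by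
  simp [linForm]

lemma coeff_linForm (a : Fin (n+1) → F) (d : Fin (n+1) →₀ ℕ) :
    coeff d (linForm a) = ∑ i, if Finsupp.single i 1 = d then a i else 0 := by
  simp [linForm, coeff_sum, C_mul_X_eq_monomial, coeff_monomial]

lemma coeff_linForm_single (a : Fin (n+1) → F) (j : Fin (n+1)) :
    coeff (Finsupp.single j 1) (linForm a) = a j := by
  rw [coeff_linForm, Finset.sum_eq_single j]
  · simp
  · intro i _ hij
    rw [if_neg]
    exact fun h => hij (Finsupp.single_left_injective one_ne_zero h)
  · simp

lemma linForm_ne_zero {a : Fin (n+1) → F} (ha : a ≠ 0) : linForm a ≠ 0 := by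
  obtain ⟨j, hj⟩ := Function.ne_iff.mp ha
  intro h
  apply hj
  have := coeff_linForm_single a j
  rw [h, coeff_zero] at this
  simpa using this.symm

lemma linForm_smul (c : F) (a : Fin (n+1) → F) : linForm (c • a) = C c * linForm a := by
  simp [linForm, Finset.mul_sum, map_mul, mul_assoc]

lemma degree_one_eq_single {d : Fin (n+1) →₀ ℕ} (hd : d.degree = 1) :
    ∃ j, d = Finsupp.single j 1 := by
  have hne : d.support.Nonempty := by
    rw [Finset.nonempty_iff_ne_empty]
    intro h
    rw [Finsupp.degree_apply, h] at hd
    simp at hd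
  obtain ⟨j, hj⟩ := hne
  refine ⟨j, ?_⟩
  have hdeg : d.degree = ∑ i ∈ d.support, d i := rfl
  have hj1 : 1 ≤ d j := Nat.one_le_iff_ne_zero.mpr (Finsupp.mem_support_iff.mp hj)
  have hsum : d j ≤ ∑ i ∈ d.support, d i := Finset.single_le_sum (fun i _ => Nat.zero_le _) hj
  ext i
  rcases eq_or_ne i j with rfl | hij
  · rw [Finsupp.single_eq_same]
    omega
  · rw [Finsupp.single_eq_of_ne' (Ne.symm hij)]
    by_contra h
    have hi : i ∈ d.support := Finsupp.mem_support_iff.mpr h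
    have h2 : d i + d j ≤ ∑ x ∈ d.support, d x := by
      have := Finset.add_le_sum (f := fun x => d x) (fun x _ => Nat.zero_le _) hi hj hij
      simpa using this
    omega

lemma eq_linForm_of_isHomogeneous {p : MvPolynomial (Fin (n+1)) F} (hp : p.IsHomogeneous 1) :
    p = linForm (fun i => coeff (Finsupp.single i 1) p) := by
  ext d
  rcases eq_or_ne (coeff d p) 0 with h0 | h0
  · rw [h0, coeff_linForm]
    rw [Finset.sum_eq_zero]
    intro i _
    split
    · next h => rw [← h] at h0; rw [h0]
    · rfl
  · obtain ⟨j, rfl⟩ := degree_one_eq_single (d := d) (by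
      have := hp h0
      rw [Finsupp.degree_eq_weight_one]; exact this)
    rw [coeff_linForm_single]

lemma map_mulLeft_C_mul (c : F) (hc : c ≠ 0) (p : MvPolynomial (Fin (n+1)) F)
    (S : Submodule F (MvPolynomial (Fin (n+1)) F)) :
    S.map (LinearMap.mulLeft F (C c * p)) = S.map (LinearMap.mulLeft F p) := by
  ext x
  simp only [Submodule.mem_map, LinearMap.mulLeft_apply]
  constructor
  · rintro ⟨y, hy, rfl⟩
    exact ⟨c • y, S.smul_mem c hy, by rw [smul_eq_C_mul]; ring⟩
  · rintro ⟨y, hy, rfl⟩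
    refine ⟨c⁻¹ • y, S.smul_mem _ hy, ?_⟩
    rw [smul_eq_C_mul, show (C c : MvPolynomial (Fin (n+1)) F) * p * (C c⁻¹ * y)
      = (C c * C c⁻¹) * (p * y) by ring, ← C_mul, mul_inv_cancel₀ hc, C_1, one_mul]

lemma exists_smul_of_ker {a b : Fin (n+1) → F} (hb : b ≠ 0)
    (h : ∀ v : Fin (n+1) → F, ∑ i, b i * v i = 0 → ∑ i, a i * v i = 0) :
    ∃ c : F, a = c • b := by
  obtain ⟨j, hj⟩ := Function.ne_iff.mp hb
  rw [Pi.zero_apply] at hj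
  refine ⟨a j / b j, ?_⟩
  funext i
  have hv : ∑ x, b x * ((if x = i then b j else 0) - (if x = j then b i else 0)) = 0 := by
    simp only [mul_sub, Finset.sum_sub_distrib, mul_ite, mul_zero, Finset.sum_ite_eq',
      Finset.mem_univ, if_true]
    ring
  have h2 := h _ hv
  simp only [mul_sub, Finset.sum_sub_distrib, mul_ite, mul_zero, Finset.sum_ite_eq',
    Finset.mem_univ, if_true] at h2
  have key : a i * b j = a j * b i := by rwa [sub_eq_zero] at h2
  have : a i = a j / b j * b i := by field_simp; linear_combination key
  simpa using this

lemma map_eq_of_smul {k m : ℕ} (a : Fin (n+1) → F) (c : F) (hc : c ≠ 0) :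
    ((MvPolynomial.homogeneousSubmodule (Fin (n+1)) F k).map
        (LinearMap.mulLeft F ((linForm (c • a))^m)))
      = (MvPolynomial.homogeneousSubmodule (Fin (n+1)) F k).map
        (LinearMap.mulLeft F ((linForm a)^m)) := by
  rw [linForm_smul, mul_pow, ← C_pow, map_mulLeft_C_mul _ (pow_ne_zero _ hc)]

lemma smul_of_map_eq {k m : ℕ} (hm : 1 ≤ m) {a b : Fin (n+1) → F}
    (ha : a ≠ 0) (hb : b ≠ 0)
    (h : (MvPolynomial.homogeneousSubmodule (Fin (n+1)) F k).map
          (LinearMap.mulLeft F ((linForm a)^m))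
       = (MvPolynomial.homogeneousSubmodule (Fin (n+1)) F k).map
          (LinearMap.mulLeft F ((linForm b)^m))) :
    ∃ c : F, c ≠ 0 ∧ b = c • a := by
  by_cases hker : ∀ v : Fin (n+1) → F, ∑ i, a i * v i = 0 → ∑ i, b i * v i = 0
  · obtain ⟨c, hc⟩ := exists_smul_of_ker ha hker
    refine ⟨c, fun h0 => hb (by rw [hc, h0, zero_smul]), hc⟩
  · push_neg at hker
    obtain ⟨v, hv0, hv1⟩ := hker
    exfalso
    have hmem : (linForm b)^m * (linForm b)^k ∈
        (MvPolynomial.homogeneousSubmodule (Fin (n+1)) F k).map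
          (LinearMap.mulLeft F ((linForm b)^m)) := by
      refine ⟨(linForm b)^k, ?_, rfl⟩
      show (linForm b)^k ∈ MvPolynomial.homogeneousSubmodule (Fin (n+1)) F k
      rw [mem_homogeneousSubmodule]
      simpa using (linForm_isHomogeneous b).pow k
    rw [← h] at hmem
    obtain ⟨R, _, hRe⟩ := hmem
    simp only [LinearMap.mulLeft_apply] at hRe
    have heval := congrArg (eval v) hRe
    rw [map_mul, map_mul, map_pow, map_pow, map_pow, eval_linForm, eval_linForm, hv0,
      zero_pow (Nat.one_le_iff_ne_zero.mp hm), zero_mul] at heval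
    have hz : (∑ i, b i * v i) ^ (m + k) = 0 := by rw [pow_add]; exact heval.symm
    exact hv1 ((pow_eq_zero_iff (by omega)).mp hz)

end Aux

lemma nat_geom (q N : ℕ) (hq : 1 ≤ q) :
    (∑ i ∈ Finset.range N, q ^ i) * (q - 1) = q ^ N - 1 := by
  induction N with
  | zero => simp
  | succ N ih =>
    rw [Finset.sum_range_succ, add_mul, ih]
    have h1 : 1 ≤ q ^ N := Nat.one_le_pow _ _ hq
    have h2 : 1 ≤ q ^ (N+1) := Nat.one_le_pow _ _ hq
    zify [h1, h2, hq]
    rw [pow_succ]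
    ring

theorem osculating_code_card (F : Type*) [Field F] [Fintype F] (n d k q : ℕ)
    (hn : 1 ≤ n) (hk : 1 ≤ k) (hkd : k < d) (hq : Fintype.card F = q) :
    Set.ncard {V : Submodule F (MvPolynomial (Fin (n+1)) F) |
        ∃ L : MvPolynomial (Fin (n+1)) F,
          L ∈ MvPolynomial.homogeneousSubmodule (Fin (n+1)) F 1 ∧ L ≠ 0 ∧
          V = (MvPolynomial.homogeneousSubmodule (Fin (n+1)) F k).map
            (LinearMap.mulLeft F (L ^ (d - k)))} =
      ∑ i ∈ Finset.range (n+1), q ^ i := by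
  classical
  have hq2 : 2 ≤ q := hq ▸ Fintype.one_lt_card
  have hm1 : 1 ≤ d - k := by omega
  set m := d - k with hmdef
  set Vfun : (Fin (n+1) → F) → Submodule F (MvPolynomial (Fin (n+1)) F) :=
    fun v => (MvPolynomial.homogeneousSubmodule (Fin (n+1)) F k).map
      (LinearMap.mulLeft F ((linForm v) ^ m)) with hVfun
  set A : Finset (Fin (n+1) → F) := Finset.univ.filter (fun v => v ≠ 0) with hA
  set B : Finset (Submodule F (MvPolynomial (Fin (n+1)) F)) := A.image Vfun with hB
  have hset : {V : Submodule F (MvPolynomial (Fin (n+1)) F) |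
        ∃ L : MvPolynomial (Fin (n+1)) F,
          L ∈ MvPolynomial.homogeneousSubmodule (Fin (n+1)) F 1 ∧ L ≠ 0 ∧
          V = (MvPolynomial.homogeneousSubmodule (Fin (n+1)) F k).map
            (LinearMap.mulLeft F (L ^ (d - k)))} = ↑B := by
    ext V
    simp only [Set.mem_setOf_eq, hB, Finset.coe_image, Set.mem_image, Finset.mem_coe, hA,
      Finset.mem_filter, Finset.mem_univ, true_and]
    constructor
    · rintro ⟨L, hL1, hL0, rfl⟩
      have hLrep : L = linForm (fun i => coeff (Finsupp.single i 1) L) :=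
        eq_linForm_of_isHomogeneous ((mem_homogeneousSubmodule _ _).mp hL1)
      refine ⟨fun i => coeff (Finsupp.single i 1) L, ?_, ?_⟩
      · intro h0
        apply hL0
        rw [hLrep, h0]
        simp [linForm]
      · rw [hVfun]
        dsimp only
        rw [← hLrep]
    · rintro ⟨v, hv, rfl⟩
      exact ⟨linForm v, (mem_homogeneousSubmodule _ _).mpr (linForm_isHomogeneous v),
        linForm_ne_zero hv, rfl⟩
  rw [hset, Set.ncard_coe_finset]
  have hAcard : A.card = q ^ (n+1) - 1 := by
    have hAe : A = Finset.univ.erase 0 := by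
      ext v
      simp [hA, Finset.mem_erase]
    rw [hAe, Finset.card_erase_of_mem (Finset.mem_univ _), Finset.card_univ, Fintype.card_fun,
      Fintype.card_fin, hq]
  have hfiber : ∀ V ∈ B, (A.filter (fun v => Vfun v = V)).card = q - 1 := by
    intro V hV
    obtain ⟨w, hw, rfl⟩ := Finset.mem_image.mp hV
    have hw0 : w ≠ 0 := (Finset.mem_filter.mp hw).2
    have himg : A.filter (fun v => Vfun v = Vfun w)
        = Finset.univ.image (fun c : Fˣ => (c : F) • w) := by
      ext v
      simp only [Finset.mem_filter, hA, Finset.mem_univ, true_and, Finset.mem_image]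
      constructor
      · rintro ⟨hv0, hveq⟩
        obtain ⟨c, hc0, hcw⟩ := smul_of_map_eq hm1 hv0 hw0 hveq
        refine ⟨(Units.mk0 c hc0)⁻¹, ?_⟩
        rw [hcw]
        simp [smul_smul, inv_mul_cancel₀ hc0]
      · rintro ⟨c, rfl⟩
        refine ⟨smul_ne_zero (Units.ne_zero c) hw0, ?_⟩
        simp only [hVfun]
        exact map_eq_of_smul w (c : F) (Units.ne_zero c)
    have hinj : Function.Injective (fun c : Fˣ => (c : F) • w) := by
      intro c c' hcc
      obtain ⟨j, hj⟩ := Function.ne_iff.mp hw0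
      have := congrFun hcc j
      simp only [Pi.smul_apply, smul_eq_mul] at this
      exact Units.ext (mul_right_cancel₀ (by simpa using hj) this)
    rw [himg, Finset.card_image_of_injective _ hinj, Finset.card_univ, Fintype.card_units, hq]
  have hsum := Finset.card_eq_sum_card_fiberwise
    (fun v hv => Finset.mem_image_of_mem Vfun hv : ∀ x ∈ A, Vfun x ∈ B)
  rw [Finset.sum_congr rfl hfiber, Finset.sum_const, smul_eq_mul] at hsum
  have hgeom := nat_geom q (n+1) (by omega)
  refine Nat.eq_of_mul_eq_mul_right (show 0 < q - 1 by omega) ?_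
  omega
end

section
/- The code C_{k,n,d} is equidistant: any two distinct elements V_1 ≠ V_2 of C_{k,n,d} have the same distance dist(V_1,V_2), namely 2(binomial(k+n,n) - binomial(2k-d+n,n)) if 2k ≥ d and 2·binomial(k+n,n) if 2k < d. -/
open MvPolynomial

namespace OscAux

variable {σ : Type*} {R : Type*}

/-- Homogeneous component of a product with a homogeneous polynomial. -/
lemma homComp_mul [CommSemiring R] {q : MvPolynomial σ R} {b : ℕ}
    (hq : q ∈ homogeneousSubmodule σ R b) (r : MvPolynomial σ R) (a : ℕ) :
    homogeneousComponent a (q * r) =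
      if b ≤ a then q * homogeneousComponent (a - b) r else 0 := by
  conv_lhs => rw [← sum_homogeneousComponent r, Finset.mul_sum, map_sum]
  have hterm : ∀ i : ℕ, homogeneousComponent a (q * homogeneousComponent i r) =
      if a = b + i then q * homogeneousComponent i r else 0 := by
    intro i
    exact homogeneousComponent_of_mem ((mem_homogeneousSubmodule _ _).mpr
      (((mem_homogeneousSubmodule _ _).mp hq).mul
        (homogeneousComponent_isHomogeneous i r)))
  rw [Finset.sum_congr rfl fun i _ => hterm i]
  by_cases hba : b ≤ a
  · rw [if_pos hba]
    by_cases hr : a - b < r.totalDegree + 1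
    · rw [Finset.sum_eq_single (a - b)]
      · rw [if_pos (by omega)]
      · intro i _ hi
        exact if_neg (by omega)
      · intro h
        exact absurd (Finset.mem_range.mpr hr) h
    · rw [Finset.sum_eq_zero, homogeneousComponent_eq_zero (a - b) r (by omega), mul_zero]
      intro i hi
      rw [Finset.mem_range] at hi
      exact if_neg (by omega)
  · rw [if_neg hba, Finset.sum_eq_zero]
    intro i _
    exact if_neg (by omega)

lemma homComp_mul₂ [CommSemiring R] (p q : MvPolynomial σ R) (e : ℕ) :
    homogeneousComponent e (p * q) =
      ∑ i ∈ Finset.range (p.totalDegree + 1), ∑ j ∈ Finset.range (q.totalDegree + 1),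
        if e = i + j then homogeneousComponent i p * homogeneousComponent j q else 0 := by
  conv_lhs => rw [← sum_homogeneousComponent p, ← sum_homogeneousComponent q,
    Finset.sum_mul_sum, map_sum]
  refine Finset.sum_congr rfl fun i _ => ?_
  rw [map_sum]
  refine Finset.sum_congr rfl fun j _ => ?_
  exact homogeneousComponent_of_mem ((mem_homogeneousSubmodule _ _).mpr
    ((homogeneousComponent_isHomogeneous i p).mul (homogeneousComponent_isHomogeneous j q)))

/-- In a domain, factors of a nonzero homogeneous polynomial are homogeneous. -/
lemma exists_deg [CommRing R] [IsDomain R] {p q : MvPolynomial σ R} {e : ℕ}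
    (h : p * q ∈ homogeneousSubmodule σ R e) (hp : p ≠ 0) (hq : q ≠ 0) :
    ∃ a b : ℕ, a + b = e ∧ p.IsHomogeneous a ∧ q.IsHomogeneous b := by
  classical
  set Sp := (Finset.range (p.totalDegree + 1)).filter
    (fun i => homogeneousComponent i p ≠ 0) with hSp
  set Sq := (Finset.range (q.totalDegree + 1)).filter
    (fun i => homogeneousComponent i q ≠ 0) with hSq
  have hSpne : Sp.Nonempty := by
    by_contra hne
    apply hp
    rw [← sum_homogeneousComponent p]
    apply Finset.sum_eq_zero
    intro i hi
    by_contra h0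
    exact hne ⟨i, Finset.mem_filter.mpr ⟨hi, h0⟩⟩
  have hSqne : Sq.Nonempty := by
    by_contra hne
    apply hq
    rw [← sum_homogeneousComponent q]
    apply Finset.sum_eq_zero
    intro i hi
    by_contra h0
    exact hne ⟨i, Finset.mem_filter.mpr ⟨hi, h0⟩⟩
  have key : ∀ i0 j0 : ℕ, i0 ∈ Sp → j0 ∈ Sq →
      (∀ i ∈ Sp, ∀ j ∈ Sq, i + j = i0 + j0 → i = i0 ∧ j = j0) →
      homogeneousComponent (i0 + j0) (p * q) =
        homogeneousComponent i0 p * homogeneousComponent j0 q := by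
    intro i0 j0 hi0 hj0 huniq
    rw [homComp_mul₂]
    rw [Finset.sum_eq_single i0]
    · rw [Finset.sum_eq_single j0]
      · rw [if_pos rfl]
      · intro j _ hjne
        exact if_neg (by omega)
      · intro hmem
        exact absurd (Finset.mem_filter.mp hj0).1 hmem
    · intro i hi hine
      apply Finset.sum_eq_zero
      intro j hj
      split_ifs with hEq
      · by_cases hip : homogeneousComponent i p = 0
        · rw [hip, zero_mul]
        · by_cases hjq : homogeneousComponent j q = 0
          · rw [hjq, mul_zero]
          · exact absurd ((huniq i (Finset.mem_filter.mpr ⟨hi, hip⟩) j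
              (Finset.mem_filter.mpr ⟨hj, hjq⟩) hEq.symm).1) hine
      · rfl
    · intro hmem
      exact absurd (Finset.mem_filter.mp hi0).1 hmem
  set Ma := Sp.max' hSpne with hMa
  set Mb := Sq.max' hSqne with hMb
  set ma := Sp.min' hSpne with hma
  set mb := Sq.min' hSqne with hmb
  have hMaS : Ma ∈ Sp := Sp.max'_mem hSpne
  have hMbS : Mb ∈ Sq := Sq.max'_mem hSqne
  have hmaS : ma ∈ Sp := Sp.min'_mem hSpne
  have hmbS : mb ∈ Sq := Sq.min'_mem hSqne
  have hMne : homogeneousComponent (Ma + Mb) (p * q) ≠ 0 := by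
    rw [key Ma Mb hMaS hMbS (fun i hi j hj hij => by
      have h1 := Sp.le_max' i hi
      have h2 := Sq.le_max' j hj
      omega)]
    exact mul_ne_zero (Finset.mem_filter.mp hMaS).2 (Finset.mem_filter.mp hMbS).2
  have hmne : homogeneousComponent (ma + mb) (p * q) ≠ 0 := by
    rw [key ma mb hmaS hmbS (fun i hi j hj hij => by
      have h1 := Sp.min'_le i hi
      have h2 := Sq.min'_le j hj
      omega)]
    exact mul_ne_zero (Finset.mem_filter.mp hmaS).2 (Finset.mem_filter.mp hmbS).2
  have hMe : Ma + Mb = e := by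
    by_contra hne
    exact hMne (by rw [homogeneousComponent_of_mem h, if_neg hne])
  have hme : ma + mb = e := by
    by_contra hne
    exact hmne (by rw [homogeneousComponent_of_mem h, if_neg hne])
  have hmaMa : ma = Ma := by
    have h1 := Sp.min'_le Ma hMaS
    have h2 := Sq.min'_le Mb hMbS
    omega
  have hmbMb : mb = Mb := by
    have h1 := Sp.min'_le Ma hMaS
    have h2 := Sq.min'_le Mb hMbS
    omega
  have hpe : p = homogeneousComponent Ma p := by
    conv_lhs => rw [← sum_homogeneousComponent p]
    rw [Finset.sum_eq_single Ma]
    · intro i hi hine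
      by_contra h0
      have hiS : i ∈ Sp := Finset.mem_filter.mpr ⟨hi, h0⟩
      have h1 := Sp.le_max' i hiS
      have h2 := Sp.min'_le i hiS
      omega
    · intro hmem
      exact absurd (Finset.mem_filter.mp hMaS).1 hmem
  have hqe : q = homogeneousComponent Mb q := by
    conv_lhs => rw [← sum_homogeneousComponent q]
    rw [Finset.sum_eq_single Mb]
    · intro i hi hine
      by_contra h0
      have hiS : i ∈ Sq := Finset.mem_filter.mpr ⟨hi, h0⟩
      have h1 := Sq.le_max' i hiS
      have h2 := Sq.min'_le i hiS
      omega
    · intro hmem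
      exact absurd (Finset.mem_filter.mp hMbS).1 hmem
  refine ⟨Ma, Mb, hMe, ?_, ?_⟩
  · rw [hpe]; exact homogeneousComponent_isHomogeneous Ma p
  · rw [hqe]; exact homogeneousComponent_isHomogeneous Mb q

lemma eq_C_of_homog0 [CommSemiring R] {p : MvPolynomial σ R} (hp : p.IsHomogeneous 0) :
    p = C (coeff 0 p) := by
  have h := homogeneousComponent_of_mem (m := 0)
    ((mem_homogeneousSubmodule _ _).mpr hp)
  rw [if_pos rfl] at h
  conv_lhs => rw [← h]
  rw [homogeneousComponent_zero]

variable {F : Type*} [Field F]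

/-- A nonzero linear form is prime. -/
lemma prime_linear {L : MvPolynomial σ F} (hL : L ∈ homogeneousSubmodule σ F 1)
    (h0 : L ≠ 0) : Prime L := by
  rw [← UniqueFactorizationMonoid.irreducible_iff_prime]
  constructor
  · intro hu
    have h1 : constantCoeff L = 0 := by
      have := ((mem_homogeneousSubmodule _ _).mp hL).coeff_eq_zero (d := 0)
        (by simp [map_zero])
      rw [constantCoeff_eq]
      exact this
    have h2 := hu.map (constantCoeff (σ := σ) (R := F))
    rw [h1] at h2
    exact not_isUnit_zero h2
  · intro a b hab
    have ha0 : a ≠ 0 := fun h => h0 (by rw [hab, h, zero_mul])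
    have hb0 : b ≠ 0 := fun h => h0 (by rw [hab, h, mul_zero])
    obtain ⟨da, db, hsum, hA, hB⟩ := exists_deg (e := 1) (by rw [← hab]; exact hL) ha0 hb0
    rcases Nat.eq_zero_or_pos da with hda | hda
    · left
      subst hda
      have hc := eq_C_of_homog0 hA
      have hcne : coeff 0 a ≠ 0 := fun h => ha0 (by rw [hc, h, C_0])
      exact IsUnit.of_mul_eq_one (C (coeff 0 a)⁻¹)
        (by rw [hc, ← C_mul, coeff_zero_C, mul_inv_cancel₀ hcne, C_1])
    · right
      have hdb : db = 0 := by omega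
      subst hdb
      have hc := eq_C_of_homog0 hB
      have hcne : coeff 0 b ≠ 0 := fun h => hb0 (by rw [hc, h, C_0])
      exact IsUnit.of_mul_eq_one (C (coeff 0 b)⁻¹)
        (by rw [hc, ← C_mul, coeff_zero_C, mul_inv_cancel₀ hcne, C_1])

lemma not_dvd_linear {L₁ L₂ : MvPolynomial σ F}
    (h₁ : L₁ ∈ homogeneousSubmodule σ F 1) (h₂ : L₂ ∈ homogeneousSubmodule σ F 1)
    (h₁0 : L₁ ≠ 0) (h₂0 : L₂ ≠ 0) (h : ∀ c : F, L₁ ≠ C c * L₂) : ¬ L₂ ∣ L₁ := by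
  rintro ⟨c, hc⟩
  have hc0 : c ≠ 0 := fun h' => h₁0 (by rw [hc, h', mul_zero])
  obtain ⟨a, b, hab, hA, hB⟩ := exists_deg (e := 1) (by rw [← hc]; exact h₁) h₂0 hc0
  have ha1 : 1 = a := ((mem_homogeneousSubmodule _ _).mp h₂).inj_right hA h₂0
  have hb0 : b = 0 := by omega
  subst hb0
  have hcC := eq_C_of_homog0 hB
  exact h (coeff 0 c) (by rw [hc, mul_comm L₂ c, ← hcC])

/-- Multiplication by a nonzero constant fixes any submodule. -/
lemma map_mulLeft_C {γ : F} (hγ : γ ≠ 0) (W : Submodule F (MvPolynomial σ F)) :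
    W.map (LinearMap.mulLeft F (C γ)) = W := by
  ext x
  simp only [Submodule.mem_map, LinearMap.mulLeft_apply]
  constructor
  · rintro ⟨y, hy, rfl⟩
    rw [← smul_eq_C_mul]
    exact W.smul_mem γ hy
  · intro hx
    refine ⟨γ⁻¹ • x, W.smul_mem _ hx, ?_⟩
    rw [← smul_eq_C_mul, smul_smul, mul_inv_cancel₀ hγ, one_smul]

lemma finrank_homSub (n k : ℕ) :
    Module.finrank F (homogeneousSubmodule (Fin (n+1)) F k) = (k + n).choose n := by
  classical
  set s : Set (Fin (n+1) →₀ ℕ) := {d | Finsupp.degree d = k} with hs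
  have e : s ≃ Sym (Fin (n+1)) k := by
    refine Equiv.subtypeEquiv Finsupp.orderIsoMultiset.toEquiv fun d => ?_
    show Finsupp.degree d = k ↔ Multiset.card (Finsupp.toMultiset d) = k
    rw [Finsupp.card_toMultiset]
    simp [Finsupp.degree, Finsupp.sum]
    rfl
  haveI : Fintype s := Fintype.ofEquiv _ e.symm
  have hsub : homogeneousSubmodule (Fin (n+1)) F k = MvPolynomial.restrictSupport F s :=
    homogeneousSubmodule_eq_finsupp_supported (Fin (n+1)) F k
  rw [hsub, Module.finrank_eq_card_basis (MvPolynomial.basisRestrictSupport F s),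
    Fintype.card_congr e, Sym.card_sym_eq_multichoose, Nat.multichoose_eq,
    Fintype.card_fin]
  have h1 : n + 1 + k - 1 = k + n := by omega
  rw [h1]
  have h2 : k + n - n = k := by omega
  rw [← Nat.choose_symm (Nat.le_add_left n k), h2]

instance finDim_homSub (n k : ℕ) :
    FiniteDimensional F (homogeneousSubmodule (Fin (n+1)) F k) := by
  classical
  set s : Set (Fin (n+1) →₀ ℕ) := {d | Finsupp.degree d = k} with hs
  have e : s ≃ Sym (Fin (n+1)) k := by
    refine Equiv.subtypeEquiv Finsupp.orderIsoMultiset.toEquiv fun d => ?_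
    show Finsupp.degree d = k ↔ Multiset.card (Finsupp.toMultiset d) = k
    rw [Finsupp.card_toMultiset]
    simp [Finsupp.degree, Finsupp.sum]
    rfl
  haveI : Fintype s := Fintype.ofEquiv _ e.symm
  have hsub : homogeneousSubmodule (Fin (n+1)) F k = MvPolynomial.restrictSupport F s :=
    homogeneousSubmodule_eq_finsupp_supported (Fin (n+1)) F k
  rw [hsub]
  exact Module.Finite.of_basis (MvPolynomial.basisRestrictSupport F s)

end OscAux

theorem osculating_code_equidistant (F : Type*) [Field F] [Fintype F] (n d k : ℕ)
    (hn : 1 ≤ n) (hk : 1 ≤ k) (hkd : k < d)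
    (V₁ V₂ : Submodule F (MvPolynomial (Fin (n+1)) F))
    (hV₁ : V₁ ∈ {V : Submodule F (MvPolynomial (Fin (n+1)) F) |
        ∃ L : MvPolynomial (Fin (n+1)) F,
          L ∈ MvPolynomial.homogeneousSubmodule (Fin (n+1)) F 1 ∧ L ≠ 0 ∧
          V = (MvPolynomial.homogeneousSubmodule (Fin (n+1)) F k).map
            (LinearMap.mulLeft F (L ^ (d - k)))})
    (hV₂ : V₂ ∈ {V : Submodule F (MvPolynomial (Fin (n+1)) F) |
        ∃ L : MvPolynomial (Fin (n+1)) F,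
          L ∈ MvPolynomial.homogeneousSubmodule (Fin (n+1)) F 1 ∧ L ≠ 0 ∧
          V = (MvPolynomial.homogeneousSubmodule (Fin (n+1)) F k).map
            (LinearMap.mulLeft F (L ^ (d - k)))})
    (hne : V₁ ≠ V₂) :
    (d ≤ 2 * k →
      Module.finrank F (V₁ ⊔ V₂ : Submodule F (MvPolynomial (Fin (n+1)) F)) -
        Module.finrank F (V₁ ⊓ V₂ : Submodule F (MvPolynomial (Fin (n+1)) F)) =
      2 * ((k + n).choose n - (2 * k - d + n).choose n)) ∧
    (2 * k < d →
      Module.finrank F (V₁ ⊔ V₂ : Submodule F (MvPolynomial (Fin (n+1)) F)) -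
        Module.finrank F (V₁ ⊓ V₂ : Submodule F (MvPolynomial (Fin (n+1)) F)) =
      2 * (k + n).choose n) := by
  classical
  obtain ⟨L₁, hL₁, hL₁0, hV₁e⟩ := hV₁
  obtain ⟨L₂, hL₂, hL₂0, hV₂e⟩ := hV₂
  subst hV₁e
  subst hV₂e
  set m := d - k with hmdef
  have hm1 : 1 ≤ m := by omega
  -- non-proportionality
  have hprop : ∀ c : F, L₁ ≠ MvPolynomial.C c * L₂ := by
    rintro c rfl
    have hc0 : c ≠ 0 := by
      rintro rfl
      simp at hL₁0
    apply hne
    have hpow : (MvPolynomial.C c * L₂) ^ m = MvPolynomial.C (c ^ m) * L₂ ^ m := by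
      rw [mul_pow, ← map_pow]
    rw [hpow, LinearMap.mulLeft_mul, Submodule.map_comp,
      OscAux.map_mulLeft_C (pow_ne_zero m hc0)]
  have hprime₂ : Prime L₂ := OscAux.prime_linear hL₂ hL₂0
  have hndvd : ¬ L₂ ∣ L₁ := OscAux.not_dvd_linear hL₁ hL₂ hL₁0 hL₂0 hprop
  have hq₁ : (L₁ ^ m).IsHomogeneous m := by
    simpa using ((MvPolynomial.mem_homogeneousSubmodule _ _).mp hL₁).pow m
  have hq₂ : (L₂ ^ m).IsHomogeneous m := by
    simpa using ((MvPolynomial.mem_homogeneousSubmodule _ _).mp hL₂).pow m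
  have h₁inj : Function.Injective (LinearMap.mulLeft F (L₁ ^ m)) := fun x y hxy =>
    mul_left_cancel₀ (pow_ne_zero m hL₁0)
      (by simpa only [LinearMap.mulLeft_apply] using hxy)
  have h₂inj : Function.Injective (LinearMap.mulLeft F (L₂ ^ m)) := fun x y hxy =>
    mul_left_cancel₀ (pow_ne_zero m hL₂0)
      (by simpa only [LinearMap.mulLeft_apply] using hxy)
  have h₁₂inj : Function.Injective (LinearMap.mulLeft F (L₁ ^ m * L₂ ^ m)) := fun x y hxy =>
    mul_left_cancel₀ (mul_ne_zero (pow_ne_zero m hL₁0) (pow_ne_zero m hL₂0))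
      (by simpa only [LinearMap.mulLeft_apply] using hxy)
  haveI inst₁ : FiniteDimensional F
      ((MvPolynomial.homogeneousSubmodule (Fin (n+1)) F k).map
        (LinearMap.mulLeft F (L₁ ^ m))) :=
    Module.Finite.equiv (Submodule.equivMapOfInjective _ h₁inj _)
  haveI inst₂ : FiniteDimensional F
      ((MvPolynomial.homogeneousSubmodule (Fin (n+1)) F k).map
        (LinearMap.mulLeft F (L₂ ^ m))) :=
    Module.Finite.equiv (Submodule.equivMapOfInjective _ h₂inj _)
  have hr₁ : Module.finrank F
      ((MvPolynomial.homogeneousSubmodule (Fin (n+1)) F k).map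
        (LinearMap.mulLeft F (L₁ ^ m))) = (k + n).choose n := by
    rw [← (Submodule.equivMapOfInjective _ h₁inj _).finrank_eq, OscAux.finrank_homSub]
  have hr₂ : Module.finrank F
      ((MvPolynomial.homogeneousSubmodule (Fin (n+1)) F k).map
        (LinearMap.mulLeft F (L₂ ^ m))) = (k + n).choose n := by
    rw [← (Submodule.equivMapOfInjective _ h₂inj _).finrank_eq, OscAux.finrank_homSub]
  -- forward analysis of the intersection
  have hfwd : ∀ x ∈ (MvPolynomial.homogeneousSubmodule (Fin (n+1)) F k).map
        (LinearMap.mulLeft F (L₁ ^ m)) ⊓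
      (MvPolynomial.homogeneousSubmodule (Fin (n+1)) F k).map
        (LinearMap.mulLeft F (L₂ ^ m)),
      (m ≤ k → x ∈ (MvPolynomial.homogeneousSubmodule (Fin (n+1)) F (k - m)).map
        (LinearMap.mulLeft F (L₁ ^ m * L₂ ^ m))) ∧ (k < m → x = 0) := by
    intro x hx
    rw [Submodule.mem_inf] at hx
    obtain ⟨hx1, hx2⟩ := hx
    rw [Submodule.mem_map] at hx1 hx2
    obtain ⟨a, ha, hxa⟩ := hx1
    obtain ⟨bb, hb, hxb⟩ := hx2
    rw [LinearMap.mulLeft_apply] at hxa hxb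
    have hdvd : L₂ ^ m ∣ L₁ ^ m * a := ⟨bb, by rw [hxa, ← hxb]⟩
    have hdvd2 : L₂ ^ m ∣ a :=
      hprime₂.pow_dvd_of_dvd_mul_left m
        (fun hd => hndvd (hprime₂.dvd_of_dvd_pow hd)) hdvd
    obtain ⟨g, rfl⟩ := hdvd2
    have hxhom : L₁ ^ m * L₂ ^ m * g ∈
        MvPolynomial.homogeneousSubmodule (Fin (n+1)) F (m + k) := by
      rw [mul_assoc]
      exact (MvPolynomial.mem_homogeneousSubmodule _ _).mpr
        (hq₁.mul ((MvPolynomial.mem_homogeneousSubmodule _ _).mp ha))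
    have hq12 : L₁ ^ m * L₂ ^ m ∈
        MvPolynomial.homogeneousSubmodule (Fin (n+1)) F (m + m) :=
      (MvPolynomial.mem_homogeneousSubmodule _ _).mpr (hq₁.mul hq₂)
    have hcomp := OscAux.homComp_mul hq12 g (m + k)
    rw [MvPolynomial.homogeneousComponent_of_mem hxhom, if_pos rfl] at hcomp
    constructor
    · intro hmk
      rw [if_pos (by omega)] at hcomp
      have hidx : m + k - (m + m) = k - m := by omega
      rw [hidx] at hcomp
      refine ⟨MvPolynomial.homogeneousComponent (k - m) g,
        MvPolynomial.homogeneousComponent_mem _ _, ?_⟩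
      rw [LinearMap.mulLeft_apply, ← hcomp, ← hxa, mul_assoc]
    · intro hkm
      rw [if_neg (by omega)] at hcomp
      rw [← hxa, ← mul_assoc, hcomp]
  refine ⟨fun hd2k => ?_, fun hd2k => ?_⟩
  · -- case d ≤ 2k
    have hmk : m ≤ k := by omega
    have hrev : (MvPolynomial.homogeneousSubmodule (Fin (n+1)) F (k - m)).map
          (LinearMap.mulLeft F (L₁ ^ m * L₂ ^ m)) ≤
        (MvPolynomial.homogeneousSubmodule (Fin (n+1)) F k).map
          (LinearMap.mulLeft F (L₁ ^ m)) ⊓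
        (MvPolynomial.homogeneousSubmodule (Fin (n+1)) F k).map
          (LinearMap.mulLeft F (L₂ ^ m)) := by
      rintro x hx
      rw [Submodule.mem_map] at hx
      obtain ⟨g, hg, rfl⟩ := hx
      have hg' := (MvPolynomial.mem_homogeneousSubmodule _ _).mp hg
      constructor
      · refine ⟨L₂ ^ m * g, ?_, ?_⟩
        · have := hq₂.mul hg'
          rw [show m + (k - m) = k by omega] at this
          exact (MvPolynomial.mem_homogeneousSubmodule _ _).mpr this
        · rw [LinearMap.mulLeft_apply, LinearMap.mulLeft_apply]
          ring
      · refine ⟨L₁ ^ m * g, ?_, ?_⟩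
        · have := hq₁.mul hg'
          rw [show m + (k - m) = k by omega] at this
          exact (MvPolynomial.mem_homogeneousSubmodule _ _).mpr this
        · rw [LinearMap.mulLeft_apply, LinearMap.mulLeft_apply]
          ring
    have hinf_eq : (MvPolynomial.homogeneousSubmodule (Fin (n+1)) F k).map
          (LinearMap.mulLeft F (L₁ ^ m)) ⊓
        (MvPolynomial.homogeneousSubmodule (Fin (n+1)) F k).map
          (LinearMap.mulLeft F (L₂ ^ m)) =
        (MvPolynomial.homogeneousSubmodule (Fin (n+1)) F (k - m)).map
          (LinearMap.mulLeft F (L₁ ^ m * L₂ ^ m)) :=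
      le_antisymm (fun x hx => (hfwd x hx).1 hmk) hrev
    have hrI : Module.finrank F
        ((MvPolynomial.homogeneousSubmodule (Fin (n+1)) F k).map
          (LinearMap.mulLeft F (L₁ ^ m)) ⊓
        (MvPolynomial.homogeneousSubmodule (Fin (n+1)) F k).map
          (LinearMap.mulLeft F (L₂ ^ m)) :
          Submodule F (MvPolynomial (Fin (n+1)) F)) = (2 * k - d + n).choose n := by
      rw [hinf_eq, ← (Submodule.equivMapOfInjective _ h₁₂inj _).finrank_eq,
        OscAux.finrank_homSub, show k - m = 2 * k - d by omega]
    have hsum := Submodule.finrank_sup_add_finrank_inf_eq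
      ((MvPolynomial.homogeneousSubmodule (Fin (n+1)) F k).map
        (LinearMap.mulLeft F (L₁ ^ m)))
      ((MvPolynomial.homogeneousSubmodule (Fin (n+1)) F k).map
        (LinearMap.mulLeft F (L₂ ^ m)))
    rw [hr₁, hr₂, hrI] at hsum
    have hIle : (2 * k - d + n).choose n ≤ (k + n).choose n :=
      Nat.choose_le_choose n (by omega)
    omega
  · -- case 2k < d
    have hinf_eq : (MvPolynomial.homogeneousSubmodule (Fin (n+1)) F k).map
          (LinearMap.mulLeft F (L₁ ^ m)) ⊓
        (MvPolynomial.homogeneousSubmodule (Fin (n+1)) F k).map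
          (LinearMap.mulLeft F (L₂ ^ m)) = ⊥ := by
      rw [Submodule.eq_bot_iff]
      intro x hx
      exact (hfwd x hx).2 (by omega)
    have hrI : Module.finrank F
        ((MvPolynomial.homogeneousSubmodule (Fin (n+1)) F k).map
          (LinearMap.mulLeft F (L₁ ^ m)) ⊓
        (MvPolynomial.homogeneousSubmodule (Fin (n+1)) F k).map
          (LinearMap.mulLeft F (L₂ ^ m)) :
          Submodule F (MvPolynomial (Fin (n+1)) F)) = 0 := by
      rw [hinf_eq]
      exact finrank_bot F _
    have hsum := Submodule.finrank_sup_add_finrank_inf_eq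
      ((MvPolynomial.homogeneousSubmodule (Fin (n+1)) F k).map
        (LinearMap.mulLeft F (L₁ ^ m)))
      ((MvPolynomial.homogeneousSubmodule (Fin (n+1)) F k).map
        (LinearMap.mulLeft F (L₂ ^ m)))
    rw [hr₁, hr₂, hrI] at hsum
    omega
end
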